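/- Let U be a relatively open subset of C, let V = (a, b) be a nonempty open interval in ℝ, and let x ∈ C × ℝ be any point. Give S = (U × V) \ (F ∪ {x}) the subspace topology from ℝ². Then for every c ∈ U and every point p ∈ ({c} × V) \ (F ∪ {x}), the set ({c} × V) \ (F ∪ {x}) is the quasi-component of p in S, i.e., it equals the intersection of all clopen subsets of S that contain p. -/

import Mathlib

/-- `c` is a non-endpoint of the Cantor set: `c ∈ C` and for every `ε > 0` both
`(c - ε, c) ∩ C` and `(c, c + ε) ∩ C` are nonempty. -/
def IsNonEndpoint (c : ℝ) : Prop :=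
  c ∈ cantorSet ∧ ∀ ε > 0,
    (Set.Ioo (c - ε) c ∩ cantorSet).Nonempty ∧ (Set.Ioo c (c + ε) ∩ cantorSet).Nonempty

/-- `f(c) = ∑_{n : d n < c} a n`. -/
noncomputable def fFun (d a : ℕ → ℝ) (c : ℝ) : ℝ := ∑' n, if d n < c then a n else 0

/-- `F`, the closure in `ℝ²` of the graph `{(c, f c) : c ∈ C}`. -/
noncomputable def Fset (d a : ℕ → ℝ) : Set (ℝ × ℝ) :=
  closure {p : ℝ × ℝ | ∃ c ∈ cantorSet, p = (c, fFun d a c)}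


section tsums
variable {d a : ℕ → ℝ}

lemma summable_a (ha_pos : ∀ n, 0 < a n) (ha_sum : ∑' n, a n = 1) : Summable a := by
  by_contra h
  rw [tsum_eq_zero_of_not_summable h] at ha_sum
  norm_num at ha_sum

lemma summable_ite (ha_pos : ∀ n, 0 < a n) (ha_sum : ∑' n, a n = 1) (P : ℕ → Prop)
    [DecidablePred P] : Summable (fun n => if P n then a n else 0) := by
  refine Summable.of_nonneg_of_le (fun n => ?_) (fun n => ?_) (summable_a ha_pos ha_sum)
  · split_ifs <;> [exact (ha_pos n).le; exact le_rfl]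
  · split_ifs <;> [exact le_rfl; exact (ha_pos n).le]

lemma tsum_ite_mono (ha_pos : ∀ n, 0 < a n) (ha_sum : ∑' n, a n = 1) (P Q : ℕ → Prop)
    [DecidablePred P] [DecidablePred Q] (h : ∀ n, P n → Q n) :
    ∑' n, (if P n then a n else 0) ≤ ∑' n, (if Q n then a n else 0) := by
  refine Summable.tsum_le_tsum (fun n => ?_) (summable_ite ha_pos ha_sum P) (summable_ite ha_pos ha_sum Q)
  by_cases hp : P n
  · simp [hp, h n hp]
  · simp only [hp, if_neg hp, if_false]
    split_ifs <;> [exact (ha_pos n).le; exact le_rfl]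

lemma single_le_tsum_ite (ha_pos : ∀ n, 0 < a n) (ha_sum : ∑' n, a n = 1) (Q : ℕ → Prop)
    [DecidablePred Q] (k : ℕ) (hk : Q k) :
    a k ≤ ∑' n, (if Q n then a n else 0) := by
  have h1 : (∑' n, (if n = k then a k else 0 : ℝ)) = a k := tsum_ite_eq k (fun _ => a k)
  rw [← h1]
  refine Summable.tsum_le_tsum (fun n => ?_) ?_ (summable_ite ha_pos ha_sum Q)
  · by_cases hn : n = k
    · subst hn; simp [hk]
    · simp [hn]; split_ifs <;> [exact (ha_pos n).le; exact le_rfl]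
  · exact (summable_ite ha_pos ha_sum (· = k)).congr (fun n => by by_cases h : n = k <;> simp [h])

lemma tsum_ite_nonneg (ha_pos : ∀ n, 0 < a n) (P : ℕ → Prop) [DecidablePred P] :
    0 ≤ ∑' n, (if P n then a n else 0) :=
  tsum_nonneg (fun n => by split_ifs <;> [exact (ha_pos n).le; exact le_rfl])

lemma fFun_mono (ha_pos : ∀ n, 0 < a n) (ha_sum : ∑' n, a n = 1) : Monotone (fFun d a) := by
  intro c₁ c₂ h
  exact tsum_ite_mono ha_pos ha_sum _ _ (fun n hn => lt_of_lt_of_le hn h)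

lemma fFun_add_single (ha_pos : ∀ n, 0 < a n) (ha_sum : ∑' n, a n = 1) {c₁ c₂ : ℝ} {k : ℕ}
    (h1 : c₁ ≤ d k) (h2 : d k < c₂) : fFun d a c₁ + a k ≤ fFun d a c₂ := by
  classical
  have hsum : fFun d a c₁ + a k
      = ∑' n, ((if d n < c₁ then a n else 0) + (if n = k then a k else 0)) := by
    rw [Summable.tsum_add (summable_ite ha_pos ha_sum _)
      ((summable_ite ha_pos ha_sum (· = k)).congr (fun n => by by_cases h : n = k <;> simp [h]))]
    rw [(show (∑' n, (if n = k then a k else 0 : ℝ)) = a k from tsum_ite_eq k (fun _ => a k))]; rfl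
  rw [hsum, fFun]
  refine Summable.tsum_le_tsum (fun n => ?_) ?_ (summable_ite ha_pos ha_sum _)
  · by_cases hn : n = k
    · subst hn
      rw [if_neg (not_lt.mpr h1), if_pos rfl, zero_add, if_pos h2]
    · rw [if_neg hn, add_zero]
      by_cases hd : d n < c₁
      · rw [if_pos hd, if_pos (hd.trans_le (h1.trans h2.le))]
      · rw [if_neg hd]
        split_ifs <;> [exact (ha_pos n).le; exact le_rfl]
  · refine Summable.add (summable_ite ha_pos ha_sum _) ?_
    exact (summable_ite ha_pos ha_sum (· = k)).congr (fun n => by by_cases h : n = k <;> simp [h])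

lemma fFun_sub_le (ha_pos : ∀ n, 0 < a n) (ha_sum : ∑' n, a n = 1) {c₁ c₂ : ℝ} (h : c₁ ≤ c₂) :
    fFun d a c₂ ≤ fFun d a c₁ + ∑' n, (if d n ∈ Set.Ico c₁ c₂ then a n else 0) := by
  classical
  simp only [fFun]
  rw [← Summable.tsum_add (summable_ite ha_pos ha_sum _) (summable_ite ha_pos ha_sum _)]
  refine Summable.tsum_le_tsum (fun n => ?_) (summable_ite ha_pos ha_sum _) ?_
  · by_cases h2 : d n < c₂
    · by_cases h1 : d n < c₁
      · have : ¬ (d n ∈ Set.Ico c₁ c₂) := fun hm => absurd hm.1 (not_le.mpr h1)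
        simp [h1, h2, this]
      · have : d n ∈ Set.Ico c₁ c₂ := ⟨not_lt.mp h1, h2⟩
        simp [h1, h2, this]
    · rw [if_neg h2]
      have h0 : (0:ℝ) ≤ (if d n < c₁ then a n else 0) :=
        by split_ifs <;> [exact (ha_pos n).le; exact le_rfl]
      have h0' : (0:ℝ) ≤ (if d n ∈ Set.Ico c₁ c₂ then a n else 0) :=
        by split_ifs <;> [exact (ha_pos n).le; exact le_rfl]
      positivity
  · exact Summable.add (summable_ite ha_pos ha_sum _) (summable_ite ha_pos ha_sum _)

end tsums

section tail
variable {d a : ℕ → ℝ}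

lemma tail_small (ha_pos : ∀ n, 0 < a n) (ha_sum : ∑' n, a n = 1) (c₀ : ℝ) {ε : ℝ}
    (hε : 0 < ε) : ∃ δ > 0, ∑' n,
      (if d n ∈ Set.Ioo (c₀ - δ) (c₀ + δ) ∧ d n ≠ c₀ then a n else 0) < ε := by
  classical
  have hsum : HasSum a 1 := ha_sum ▸ (summable_a ha_pos ha_sum).hasSum
  have : ∀ᶠ s in Filter.atTop, ∑ i ∈ s, a i ∈ Metric.ball (1:ℝ) (ε/2) :=
    hsum (Metric.ball_mem_nhds 1 (by positivity))
  obtain ⟨s, hs⟩ := this.exists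
  rw [Metric.mem_ball, Real.dist_eq, abs_lt] at hs
  -- choose δ
  set s' := s.filter (fun n => d n ≠ c₀) with hs'
  set δ : ℝ := if hne : s'.Nonempty then min 1 (s'.inf' hne (fun n => |d n - c₀|)) else 1 with hδ
  have hδpos : 0 < δ := by
    rw [hδ]
    split_ifs with hne
    · refine lt_min one_pos ?_
      rw [Finset.lt_inf'_iff]
      intro n hn
      have : d n ≠ c₀ := (Finset.mem_filter.mp hn).2
      simpa using sub_ne_zero.mpr this
    · exact one_pos
  refine ⟨δ, hδpos, ?_⟩
  have hkey : ∀ n, (d n ∈ Set.Ioo (c₀ - δ) (c₀ + δ) ∧ d n ≠ c₀) → n ∉ s := by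
    intro n hn hns
    have hns' : n ∈ s' := Finset.mem_filter.mpr ⟨hns, hn.2⟩
    have habs : |d n - c₀| < δ := abs_lt.mpr ⟨by linarith [hn.1.1], by linarith [hn.1.2]⟩
    have : δ ≤ |d n - c₀| := by
      rw [hδ]
      split_ifs with hne
      · exact (min_le_right _ _).trans (Finset.inf'_le _ hns')
      · exact absurd ⟨n, hns'⟩ hne
    linarith
  have h1 : ∑' n, (if d n ∈ Set.Ioo (c₀ - δ) (c₀ + δ) ∧ d n ≠ c₀ then a n else 0)
      ≤ ∑' n, (if n ∉ s then a n else 0) :=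
    tsum_ite_mono ha_pos ha_sum _ _ hkey
  have h2 : ∑' n, (if n ∉ s then a n else 0) = 1 - ∑ i ∈ s, a i := by
    have hg : ∑' n, (if n ∈ s then a n else 0) = ∑ i ∈ s, a i := by
      rw [tsum_eq_sum (s := s) (fun n hn => by simp [hn])]
      exact Finset.sum_congr rfl (fun n hn => by simp [hn])
    have hsplit : ∀ n, (if n ∉ s then a n else 0) = a n - (if n ∈ s then a n else 0) := by
      intro n; by_cases hn : n ∈ s <;> simp [hn]
    rw [tsum_congr hsplit, Summable.tsum_sub (summable_a ha_pos ha_sum)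
      (summable_ite ha_pos ha_sum _), hg, ha_sum]
  have : (1:ℝ) - ∑ i ∈ s, a i < ε := by linarith [hs.1]
  linarith

end tail

section fiber
variable {d a : ℕ → ℝ}

lemma tsum_ite_le_add_single (ha_pos : ∀ n, 0 < a n) (ha_sum : ∑' n, a n = 1)
    (P Q : ℕ → Prop) [DecidablePred P] [DecidablePred Q] (k : ℕ)
    (h : ∀ n, P n → n = k ∨ Q n) :
    ∑' n, (if P n then a n else 0) ≤ a k + ∑' n, (if Q n then a n else 0) := by
  have htsum : a k + ∑' n, (if Q n then a n else 0)
      = ∑' n, ((if n = k then a n else 0) + (if Q n then a n else 0)) := by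
    rw [Summable.tsum_add ((summable_ite ha_pos ha_sum (· = k)).congr
      (fun n => by by_cases h : n = k <;> simp [h])) (summable_ite ha_pos ha_sum Q)]
    congr 1
    rw [← (show (∑' n, (if n = k then a k else 0 : ℝ)) = a k from tsum_ite_eq k (fun _ => a k))]
    exact tsum_congr (fun n => by by_cases h : n = k <;> simp [h])
  rw [htsum]
  refine Summable.tsum_le_tsum (fun n => ?_) (summable_ite ha_pos ha_sum P) ?_
  · have hQ0 : (0:ℝ) ≤ (if Q n then a n else 0) := by
      split_ifs <;> [exact (ha_pos n).le; exact le_rfl]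
    have hP0 : (if P n then a n else 0) ≤ a n := by
      split_ifs <;> [exact le_rfl; exact (ha_pos n).le]
    by_cases hn : n = k
    · subst hn; rw [if_pos rfl]; linarith
    · rw [if_neg hn, zero_add]
      by_cases hp : P n
      · rcases h n hp with h' | h'
        · exact absurd h' hn
        · rw [if_pos hp, if_pos h']
      · rw [if_neg hp]; exact hQ0
  · exact Summable.add ((summable_ite ha_pos ha_sum (· = k)).congr
      (fun n => by by_cases h : n = k <;> simp [h])) (summable_ite ha_pos ha_sum Q)

lemma fiber_mem (hd_inj : Function.Injective d) (ha_pos : ∀ n, 0 < a n)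
    (ha_sum : ∑' n, a n = 1) {c' u : ℝ} (h : (c', u) ∈ Fset d a) :
    u = fFun d a c' ∨ ∃ k, d k = c' ∧ u = fFun d a c' + a k := by
  classical
  by_contra hcon
  push_neg at hcon
  obtain ⟨h1, h2⟩ := hcon
  by_cases hk : ∃ k, d k = c'
  · obtain ⟨k, hdk⟩ := hk
    have h2k := h2 k hdk
    set x1 := |u - fFun d a c'| with hx1
    set x2 := |u - (fFun d a c' + a k)| with hx2
    set ε : ℝ := min x1 x2 / 3 with hε
    have hε1 : 0 < x1 := abs_pos.mpr (sub_ne_zero.mpr h1)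
    have hε2 : 0 < x2 := abs_pos.mpr (sub_ne_zero.mpr h2k)
    have hεpos : 0 < ε := by rw [hε]; positivity
    obtain ⟨δ, hδpos, hδ⟩ := tail_small (d := d) ha_pos ha_sum c' hεpos
    obtain ⟨b, hb, hdist⟩ := Metric.mem_closure_iff.mp h (min δ ε) (lt_min hδpos hεpos)
    obtain ⟨c₁, -, rfl⟩ := hb
    rw [Prod.dist_eq, max_lt_iff, Real.dist_eq, Real.dist_eq] at hdist
    obtain ⟨hd1, hd2⟩ := hdist
    have hc₁δ : |c' - c₁| < δ := hd1.trans_le (min_le_left _ _)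
    have hu : |u - fFun d a c₁| < ε := hd2.trans_le (min_le_right _ _)
    have habs := abs_lt.mp hc₁δ
    rcases le_or_gt c₁ c' with hcc | hcc
    · have hlow : fFun d a c₁ ≤ fFun d a c' := fFun_mono ha_pos ha_sum hcc
      have hupp : fFun d a c' ≤ fFun d a c₁
          + ∑' n, (if d n ∈ Set.Ico c₁ c' then a n else 0) :=
        fFun_sub_le ha_pos ha_sum hcc
      have hT : ∑' n, (if d n ∈ Set.Ico c₁ c' then a n else 0)
          ≤ ∑' n, (if d n ∈ Set.Ioo (c' - δ) (c' + δ) ∧ d n ≠ c' then a n else 0) := by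
        refine tsum_ite_mono ha_pos ha_sum _ _ (fun n hn => ?_)
        exact ⟨⟨by linarith [hn.1], by linarith [hn.2]⟩, ne_of_lt hn.2⟩
      have hub : |u - fFun d a c'| < 2 * ε := by
        rw [abs_sub_lt_iff] at hu ⊢
        constructor <;> linarith [hT.trans_lt hδ]
      have h3 : 3 * ε ≤ x1 := by
        have := min_le_left x1 x2; rw [hε]; linarith
      rw [← hx1] at hub; linarith
    · have hlow : fFun d a c' + a k ≤ fFun d a c₁ :=
        fFun_add_single ha_pos ha_sum (le_of_eq hdk.symm) (hdk ▸ hcc)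
      have hupp : fFun d a c₁ ≤ fFun d a c'
          + ∑' n, (if d n ∈ Set.Ico c' c₁ then a n else 0) :=
        fFun_sub_le ha_pos ha_sum hcc.le
      have hT : ∑' n, (if d n ∈ Set.Ico c' c₁ then a n else 0)
          ≤ a k + ∑' n, (if d n ∈ Set.Ioo (c' - δ) (c' + δ) ∧ d n ≠ c' then a n else 0) := by
        refine tsum_ite_le_add_single ha_pos ha_sum _ _ k (fun n hn => ?_)
        by_cases hnk : n = k
        · exact Or.inl hnk
        · refine Or.inr ⟨⟨by linarith [hn.1], by linarith [hn.2]⟩, fun hc => ?_⟩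
          exact hnk (hd_inj (hc.trans hdk.symm))
      have hub : |u - (fFun d a c' + a k)| < 2 * ε := by
        rw [abs_sub_lt_iff] at hu ⊢
        constructor <;> linarith [hT.trans_lt (by linarith [hδ] : a k + ∑' n,
          (if d n ∈ Set.Ioo (c' - δ) (c' + δ) ∧ d n ≠ c' then a n else 0) < a k + ε)]
      have h3 : 3 * ε ≤ x2 := by
        have := min_le_right x1 x2; rw [hε]; linarith
      rw [← hx2] at hub; linarith
  · push_neg at hk
    set ε : ℝ := |u - fFun d a c'| / 3 with hε
    have hε1 : 0 < |u - fFun d a c'| := abs_pos.mpr (sub_ne_zero.mpr h1)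
    have hεpos : 0 < ε := by rw [hε]; positivity
    obtain ⟨δ, hδpos, hδ⟩ := tail_small (d := d) ha_pos ha_sum c' hεpos
    obtain ⟨b, hb, hdist⟩ := Metric.mem_closure_iff.mp h (min δ ε) (lt_min hδpos hεpos)
    obtain ⟨c₁, -, rfl⟩ := hb
    rw [Prod.dist_eq, max_lt_iff, Real.dist_eq, Real.dist_eq] at hdist
    obtain ⟨hd1, hd2⟩ := hdist
    have hc₁δ : |c' - c₁| < δ := hd1.trans_le (min_le_left _ _)
    have hu : |u - fFun d a c₁| < ε := hd2.trans_le (min_le_right _ _)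
    have habs := abs_lt.mp hc₁δ
    have key : |fFun d a c₁ - fFun d a c'| < ε := by
      rcases le_or_gt c₁ c' with hcc | hcc
      · have hlow : fFun d a c₁ ≤ fFun d a c' := fFun_mono ha_pos ha_sum hcc
        have hupp : fFun d a c' ≤ fFun d a c₁
            + ∑' n, (if d n ∈ Set.Ico c₁ c' then a n else 0) :=
          fFun_sub_le ha_pos ha_sum hcc
        have hT : ∑' n, (if d n ∈ Set.Ico c₁ c' then a n else 0)
            ≤ ∑' n, (if d n ∈ Set.Ioo (c' - δ) (c' + δ) ∧ d n ≠ c' then a n else 0) :=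
          tsum_ite_mono ha_pos ha_sum _ _ (fun n hn =>
            ⟨⟨by linarith [hn.1], by linarith [hn.2]⟩, ne_of_lt hn.2⟩)
        rw [abs_lt]; constructor <;> linarith [hT.trans_lt hδ]
      · have hlow : fFun d a c' ≤ fFun d a c₁ := fFun_mono ha_pos ha_sum hcc.le
        have hupp : fFun d a c₁ ≤ fFun d a c'
            + ∑' n, (if d n ∈ Set.Ico c' c₁ then a n else 0) :=
          fFun_sub_le ha_pos ha_sum hcc.le
        have hT : ∑' n, (if d n ∈ Set.Ico c' c₁ then a n else 0)
            ≤ ∑' n, (if d n ∈ Set.Ioo (c' - δ) (c' + δ) ∧ d n ≠ c' then a n else 0) :=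
          tsum_ite_mono ha_pos ha_sum _ _ (fun n hn =>
            ⟨⟨by linarith [hn.1], by linarith [hn.2]⟩, hk n⟩)
        rw [abs_lt]; constructor <;> linarith [hT.trans_lt hδ]
    have hub : |u - fFun d a c'| < 2 * ε := by
      rw [abs_sub_lt_iff] at hu ⊢
      rw [abs_lt] at key
      constructor <;> linarith
    linarith

end fiber

section topo

lemma seg_same_class {S : Set (ℝ × ℝ)} {A : Set ↥S} (hA : IsClopen A) {c' u₁ u₂ : ℝ}
    (h12 : u₁ ≤ u₂) (hseg : ∀ u, u ∈ Set.Icc u₁ u₂ → (c', u) ∈ S)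
    (h1 : (⟨(c', u₁), hseg u₁ ⟨le_rfl, h12⟩⟩ : ↥S) ∈ A) :
    (⟨(c', u₂), hseg u₂ ⟨h12, le_rfl⟩⟩ : ↥S) ∈ A := by
  have hclamp : ∀ u : ℝ, max u₁ (min u u₂) ∈ Set.Icc u₁ u₂ :=
    fun u => ⟨le_max_left _ _, max_le h12 (min_le_right _ _)⟩
  set φ : ℝ → ↥S := fun u => ⟨(c', max u₁ (min u u₂)), hseg _ (hclamp u)⟩ with hφ
  have hcont : Continuous φ := by
    refine Continuous.subtype_mk ?_ _
    exact (continuous_const.prodMk ((continuous_const.max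
      ((continuous_id.min continuous_const)))))
  have hpre : IsPreconnected (φ '' Set.Icc u₁ u₂) :=
    isPreconnected_Icc.image φ hcont.continuousOn
  have hsub : φ '' Set.Icc u₁ u₂ ⊆ A := by
    refine hpre.subset_isClopen hA ⟨φ u₁, Set.mem_image_of_mem φ ⟨le_rfl, h12⟩, ?_⟩
    have : φ u₁ = ⟨(c', u₁), hseg u₁ ⟨le_rfl, h12⟩⟩ := by
      rw [hφ]; congr 1
      simp [min_eq_left h12]
    rwa [this]
  have h2 : φ u₂ = ⟨(c', u₂), hseg u₂ ⟨h12, le_rfl⟩⟩ := by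
    rw [hφ]; congr 1
    simp [min_self, max_eq_right h12]
  rw [← h2]
  exact hsub (Set.mem_image_of_mem φ ⟨h12, le_rfl⟩)

lemma open_ball_subset {S : Set (ℝ × ℝ)} {A : Set ↥S} (hA : IsOpen A) {q : ↥S} (hq : q ∈ A) :
    ∃ δ > 0, ∀ r : ↥S, dist (r : ℝ × ℝ) (q : ℝ × ℝ) < δ → r ∈ A := by
  obtain ⟨δ, hδpos, hball⟩ := Metric.isOpen_iff.mp hA q hq
  exact ⟨δ, hδpos, fun r hr => hball (by rwa [Metric.mem_ball, Subtype.dist_eq])⟩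

lemma mem_of_closed_approx {S : Set (ℝ × ℝ)} {A : Set ↥S} (hA : IsClosed A) {q : ↥S}
    (h : ∀ δ > 0, ∃ r ∈ A, dist (r : ℝ × ℝ) (q : ℝ × ℝ) < δ) : q ∈ A := by
  rw [← hA.closure_eq]
  rw [Metric.mem_closure_iff]
  intro ε hε
  obtain ⟨r, hr, hd⟩ := h ε hε
  exact ⟨r, hr, by rwa [Subtype.dist_eq, dist_comm]⟩

lemma pre_cantor_subset_unit (n : ℕ) : preCantorSet n ⊆ Set.Icc 0 1 := by
  induction n with
  | zero => exact le_rfl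
  | succ n ih =>
    rintro x (⟨y, hy, rfl⟩ | ⟨y, hy, rfl⟩)
    · obtain ⟨h0, h1⟩ := ih hy
      exact ⟨by linarith, by linarith⟩
    · obtain ⟨h0, h1⟩ := ih hy
      constructor <;> simp only [] <;> linarith

lemma cantor_no_interval {α β : ℝ} (h : α < β) : ∃ s, α < s ∧ s < β ∧ s ∉ cantorSet := by
  by_contra hcon
  push_neg at hcon
  have hsub : Set.Ioo α β ⊆ cantorSet := fun s hs => hcon s hs.1 hs.2
  have aux : ∀ n : ℕ, ∀ α' β' : ℝ, α' < β' → Set.Ioo α' β' ⊆ preCantorSet n →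
      β' - α' ≤ (1/3 : ℝ) ^ n := by
    intro n
    induction n with
    | zero =>
      intro α' β' hab hsub'
      simp only [pow_zero]
      by_contra hgt
      push_neg at hgt
      have hα : (0:ℝ) ≤ α' ∨ α' < 0 := le_or_gt 0 α'
      have h1 : ∀ s, s ∈ Set.Ioo α' β' → 0 ≤ s ∧ s ≤ 1 := fun s hs => hsub' hs
      -- β' > 1 + α' ; find point > 1 or < 0
      rcases le_or_gt β' 1 with hβ | hβ
      · -- then α' < β' - 1 ≤ 0, pick s between α' and min β' 0
        have hα0 : α' < 0 := by linarith
        have hm : α' < min β' 0 := lt_min hab hα0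
        set s := (α' + min β' 0) / 2 with hs
        have hs1 : α' < s := by rw [hs]; linarith
        have hs2 : s < min β' 0 := by rw [hs]; linarith
        have := h1 s ⟨hs1, hs2.trans_le (min_le_left _ _)⟩
        have := hs2.trans_le (min_le_right _ _)
        linarith [this]
      · -- β' > 1: pick s between max α' 1 and β'
        have hm : max α' 1 < β' := max_lt (by linarith) hβ
        set s := (max α' 1 + β') / 2 with hs
        have hs1 : max α' 1 < s := by rw [hs]; linarith
        have hs2 : s < β' := by rw [hs]; linarith
        have := h1 s ⟨(le_max_left _ _).trans_lt hs1, hs2⟩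
        have := (le_max_right α' 1).trans_lt hs1
        linarith [this]
    | succ n ih =>
      intro α' β' hab hsub'
      have himg : Set.Ioo α' β' ⊆ (· / 3) '' preCantorSet n
          ∨ Set.Ioo α' β' ⊆ (fun x => (2 + x) / 3) '' preCantorSet n := by
        by_contra hboth
        push_neg at hboth
        obtain ⟨s₁, hs₁I, hs₁⟩ := Set.not_subset.mp hboth.1
        obtain ⟨s₂, hs₂I, hs₂⟩ := Set.not_subset.mp hboth.2
        have hm₁ : s₁ ∈ (fun x => (2 + x) / 3) '' preCantorSet n := by
          rcases hsub' hs₁I with h | h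
          · exact absurd h hs₁
          · exact h
        have hm₂ : s₂ ∈ (· / 3) '' preCantorSet n := by
          rcases hsub' hs₂I with h | h
          · exact h
          · exact absurd h hs₂
        obtain ⟨y₁, hy₁, rfl⟩ := hm₁
        obtain ⟨y₂, hy₂, rfl⟩ := hm₂
        have hb₁ := pre_cantor_subset_unit n hy₁
        have hb₂ := pre_cantor_subset_unit n hy₂
        -- s₂ ≤ 1/3 < 1/2 < 2/3 ≤ s₁, and 1/2 ∈ Ioo α' β'
        have hI : (1/2 : ℝ) ∈ Set.Ioo α' β' := by
          constructor
          · have := hs₂I.1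
            have : y₂ / 3 ≤ 1/3 := by linarith [hb₂.2]
            linarith [hs₂I.1]
          · have : (2 + y₁) / 3 ≥ 2/3 := by linarith [hb₁.1]
            linarith [hs₁I.2]
        rcases hsub' hI with ⟨y, hy, hyeq⟩ | ⟨y, hy, hyeq⟩
        · have h1 := (pre_cantor_subset_unit n hy).2
          simp only [] at hyeq
          have : (1:ℝ)/2 ≤ 1/3 := by rw [← hyeq]; linarith
          norm_num at this
        · have h1 := (pre_cantor_subset_unit n hy).1
          simp only [] at hyeq
          have : (2:ℝ)/3 ≤ 1/2 := by rw [← hyeq]; linarith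
          norm_num at this
      rcases himg with him | him
      · have hsub2 : Set.Ioo (3 * α') (3 * β') ⊆ preCantorSet n := by
          intro s hs
          have : s / 3 ∈ Set.Ioo α' β' := ⟨by linarith [hs.1], by linarith [hs.2]⟩
          obtain ⟨y, hy, hyeq⟩ := him this
          have : y = s := by
            field_simp at hyeq; linarith
          rwa [← this]
        have := ih (3 * α') (3 * β') (by linarith) hsub2
        rw [pow_succ]
        linarith
      · have hsub2 : Set.Ioo (3 * α' - 2) (3 * β' - 2) ⊆ preCantorSet n := by
          intro s hs
          have : (2 + s) / 3 ∈ Set.Ioo α' β' := ⟨by linarith [hs.1], by linarith [hs.2]⟩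
          obtain ⟨y, hy, hyeq⟩ := him this
          have : y = s := by
            field_simp at hyeq; linarith
          rwa [← this]
        have := ih (3 * α' - 2) (3 * β' - 2) (by linarith) hsub2
        rw [pow_succ]
        linarith
  obtain ⟨n, hn⟩ := exists_pow_lt_of_lt_one (by linarith : (0:ℝ) < β - α)
    (by norm_num : (1/3 : ℝ) < 1)
  have := aux n α β h (fun s hs => Set.mem_iInter.mp (hsub hs) n)
  linarith

end topo

section approach
variable {d a : ℕ → ℝ}

lemma approach_right {c₀ : ℝ} (hne : ∀ ε > 0, (Set.Ioo c₀ (c₀ + ε) ∩ cantorSet).Nonempty)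
    {O : Set ℝ} (hO : IsOpen O) (hcO : c₀ ∈ O) {ρ : ℝ} (hρ : 0 < ρ) (ξ₁ ξ₂ : ℝ) :
    ∃ c'', c'' ∈ O ∩ cantorSet ∧ c₀ < c'' ∧ c'' - c₀ < ρ ∧ c'' ≠ ξ₁ ∧ c'' ≠ ξ₂ := by
  obtain ⟨ε₀, hε₀pos, hball⟩ := Metric.isOpen_iff.mp hO c₀ hcO
  set q₁ : ℝ := if c₀ < ξ₁ then ξ₁ - c₀ else 1 with hq₁
  set q₂ : ℝ := if c₀ < ξ₂ then ξ₂ - c₀ else 1 with hq₂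
  have hq₁pos : 0 < q₁ := by rw [hq₁]; split_ifs with h <;> [linarith; exact one_pos]
  have hq₂pos : 0 < q₂ := by rw [hq₂]; split_ifs with h <;> [linarith; exact one_pos]
  set ρ' := min (min ρ ε₀) (min q₁ q₂) with hρ'
  have hρ'pos : 0 < ρ' := lt_min (lt_min hρ hε₀pos) (lt_min hq₁pos hq₂pos)
  obtain ⟨c'', ⟨hlt, hlt2⟩, hC⟩ := hne ρ' hρ'pos
  refine ⟨c'', ⟨hball ?_, hC⟩, hlt, ?_, ?_, ?_⟩
  · rw [Metric.mem_ball, Real.dist_eq, abs_lt]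
    have : ρ' ≤ ε₀ := (min_le_left _ _).trans (min_le_right _ _)
    constructor <;> linarith
  · have : ρ' ≤ ρ := (min_le_left _ _).trans (min_le_left _ _)
    linarith
  · intro he
    have hle : ρ' ≤ q₁ := (min_le_right _ _).trans (min_le_left _ _)
    rw [hq₁] at hle
    split_ifs at hle with h
    · subst he; linarith
    · subst he; exact h hlt
  · intro he
    have hle : ρ' ≤ q₂ := (min_le_right _ _).trans (min_le_right _ _)
    rw [hq₂] at hle
    split_ifs at hle with h
    · subst he; linarith
    · subst he; exact h hlt

lemma approach_left {c₀ : ℝ} (hne : ∀ ε > 0, (Set.Ioo (c₀ - ε) c₀ ∩ cantorSet).Nonempty)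
    {O : Set ℝ} (hO : IsOpen O) (hcO : c₀ ∈ O) {ρ : ℝ} (hρ : 0 < ρ) (ξ₁ ξ₂ : ℝ) :
    ∃ c'', c'' ∈ O ∩ cantorSet ∧ c'' < c₀ ∧ c₀ - c'' < ρ ∧ c'' ≠ ξ₁ ∧ c'' ≠ ξ₂ := by
  obtain ⟨ε₀, hε₀pos, hball⟩ := Metric.isOpen_iff.mp hO c₀ hcO
  set q₁ : ℝ := if ξ₁ < c₀ then c₀ - ξ₁ else 1 with hq₁
  set q₂ : ℝ := if ξ₂ < c₀ then c₀ - ξ₂ else 1 with hq₂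
  have hq₁pos : 0 < q₁ := by rw [hq₁]; split_ifs with h <;> [linarith; exact one_pos]
  have hq₂pos : 0 < q₂ := by rw [hq₂]; split_ifs with h <;> [linarith; exact one_pos]
  set ρ' := min (min ρ ε₀) (min q₁ q₂) with hρ'
  have hρ'pos : 0 < ρ' := lt_min (lt_min hρ hε₀pos) (lt_min hq₁pos hq₂pos)
  obtain ⟨c'', ⟨hlt, hlt2⟩, hC⟩ := hne ρ' hρ'pos
  refine ⟨c'', ⟨hball ?_, hC⟩, hlt2, ?_, ?_, ?_⟩
  · rw [Metric.mem_ball, Real.dist_eq, abs_lt]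
    have : ρ' ≤ ε₀ := (min_le_left _ _).trans (min_le_right _ _)
    constructor <;> linarith
  · have : ρ' ≤ ρ := (min_le_left _ _).trans (min_le_left _ _)
    linarith
  · intro he
    have hle : ρ' ≤ q₁ := (min_le_right _ _).trans (min_le_left _ _)
    rw [hq₁] at hle
    split_ifs at hle with h
    · subst he; linarith
    · subst he; exact h hlt2
  · intro he
    have hle : ρ' ≤ q₂ := (min_le_right _ _).trans (min_le_right _ _)
    rw [hq₂] at hle
    split_ifs at hle with h
    · subst he; linarith
    · subst he; exact h hlt2

lemma near_in_U (hd_ne : ∀ n, IsNonEndpoint (d n)) (hd_dense : cantorSet ⊆ closure (Set.range d))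
    {c₀ : ℝ} (hcC : c₀ ∈ cantorSet) {O : Set ℝ} (hO : IsOpen O) (hcO : c₀ ∈ O) {ρ : ℝ}
    (hρ : 0 < ρ) : ∃ c'', c'' ∈ O ∩ cantorSet ∧ c'' ≠ c₀ ∧ |c'' - c₀| < ρ := by
  by_cases hr : c₀ ∈ Set.range d
  · obtain ⟨n, rfl⟩ := hr
    obtain ⟨c'', hc''⟩ := approach_right (fun ε hε => ((hd_ne n).2 ε hε).2) hO hcO hρ (d n) (d n)
    exact ⟨c'', hc''.1, fun he => absurd he.symm (ne_of_lt hc''.2.1),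
      abs_lt.mpr ⟨by linarith [hc''.2.1], by linarith [hc''.2.2.1]⟩⟩
  · obtain ⟨ε₀, hε₀pos, hball⟩ := Metric.isOpen_iff.mp hO c₀ hcO
    obtain ⟨z, hz, hdist⟩ := Metric.mem_closure_iff.mp (hd_dense hcC) (min ρ ε₀)
      (lt_min hρ hε₀pos)
    obtain ⟨n, rfl⟩ := hz
    refine ⟨d n, ⟨hball ?_, (hd_ne n).1⟩, fun he => hr ⟨n, he⟩, ?_⟩
    · rw [Metric.mem_ball, dist_comm]
      exact hdist.trans_le (min_le_right _ _)
    · rw [dist_comm, Real.dist_eq] at hdist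
      exact hdist.trans_le (min_le_left _ _)

lemma dpoint_near (hd_ne : ∀ n, IsNonEndpoint (d n))
    (hd_dense : cantorSet ⊆ closure (Set.range d)) {c₀ : ℝ} (hcC : c₀ ∈ cantorSet)
    {O : Set ℝ} (hO : IsOpen O) (hcO : c₀ ∈ O) (hnr : c₀ ∉ Set.range d) {ρ : ℝ}
    (hρ : 0 < ρ) (ξ : ℝ) :
    ∃ m, d m ∈ O ∩ cantorSet ∧ d m ≠ c₀ ∧ d m ≠ ξ ∧ |d m - c₀| < ρ := by
  obtain ⟨ε₀, hε₀pos, hball⟩ := Metric.isOpen_iff.mp hO c₀ hcO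
  set q : ℝ := if ξ ≠ c₀ then |ξ - c₀| else 1 with hq
  have hqpos : 0 < q := by
    rw [hq]; split_ifs with h
    · exact abs_pos.mpr (sub_ne_zero.mpr h)
    · exact one_pos
  obtain ⟨z, hz, hdist⟩ := Metric.mem_closure_iff.mp (hd_dense hcC) (min (min ρ ε₀) q)
    (lt_min (lt_min hρ hε₀pos) hqpos)
  obtain ⟨m, rfl⟩ := hz
  rw [dist_comm, Real.dist_eq] at hdist
  have hdm_ne : d m ≠ c₀ := fun he => hnr ⟨m, he⟩
  refine ⟨m, ⟨hball ?_, (hd_ne m).1⟩, hdm_ne, ?_, ?_⟩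
  · rw [Metric.mem_ball, Real.dist_eq]
    exact hdist.trans_le ((min_le_left _ _).trans (min_le_right _ _))
  · have h2 : |d m - c₀| < q := hdist.trans_le (min_le_right _ _)
    intro he
    rw [hq] at h2
    by_cases h : ξ ≠ c₀
    · rw [if_pos h, ← he] at h2; linarith
    · push_neg at h; subst h; exact hdm_ne he
  · exact hdist.trans_le ((min_le_left _ _).trans (min_le_left _ _))

end approach

section core

lemma core_lemma (d a : ℕ → ℝ) (hd_inj : Function.Injective d)
    (hd_ne : ∀ n, IsNonEndpoint (d n)) (hd_dense : cantorSet ⊆ closure (Set.range d))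
    (ha_pos : ∀ n, 0 < a n) (ha_sum : ∑' n, a n = 1)
    (U : Set ℝ) (hUsub : U ⊆ cantorSet) (O : Set ℝ) (hO : IsOpen O) (hUO : U = O ∩ cantorSet)
    (v w : ℝ) (x : ℝ × ℝ)
    {S : Set (ℝ × ℝ)} (hS : S = (U ×ˢ Set.Ioo v w) \ (Fset d a ∪ {x}))
    (A : Set ↥S) (hA : IsClopen A)
    (c y y' : ℝ) (hcU : c ∈ U) (hyy' : y < y')
    (hy : (c, y) ∈ S) (hy' : (c, y') ∈ S)
    (hyA : (⟨(c, y), hy⟩ : ↥S) ∈ A)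
    (hy'A : (⟨(c, y'), hy'⟩ : ↥S) ∉ A) : False := by
  classical
  have hcO : c ∈ O := (hUO ▸ hcU).1
  have hcC : c ∈ cantorSet := hUsub hcU
  -- membership helpers
  have hSdest : ∀ c₁ u₁ : ℝ, (c₁, u₁) ∈ S →
      c₁ ∈ U ∧ (v < u₁ ∧ u₁ < w) ∧ (c₁, u₁) ∉ Fset d a ∧ (c₁, u₁) ≠ x := by
    intro c₁ u₁ h
    rw [hS] at h
    obtain ⟨⟨h1, h2, h3⟩, h4⟩ := h
    rw [Set.mem_union, Set.mem_singleton_iff] at h4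
    push_neg at h4
    exact ⟨h1, ⟨h2, h3⟩, h4.1, h4.2⟩
  have hSmem : ∀ c₁ u₁ : ℝ, c₁ ∈ U → v < u₁ → u₁ < w → (c₁, u₁) ∉ Fset d a →
      (c₁, u₁) ≠ x → (c₁, u₁) ∈ S := by
    intro c₁ u₁ h1 h2 h3 h4 h5
    rw [hS]
    refine ⟨⟨h1, h2, h3⟩, ?_⟩
    rw [Set.mem_union, Set.mem_singleton_iff]
    push_neg
    exact ⟨h4, h5⟩
  have hdlt : ∀ (c₁ c₂ u₁ u₂ δ : ℝ), |c₁ - c₂| < δ → |u₁ - u₂| < δ →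
      dist ((c₁, u₁) : ℝ × ℝ) ((c₂, u₂) : ℝ × ℝ) < δ := by
    intro c₁ c₂ u₁ u₂ δ h1 h2
    rw [Prod.dist_eq]
    exact max_lt (by rwa [Real.dist_eq]) (by rwa [Real.dist_eq])
  have hyv : v < y := (hSdest c y hy).2.1.1
  have hy'w : y' < w := (hSdest c y' hy').2.1.2
  have hyw : y < w := hyy'.trans hy'w
  have hy'v : v < y' := hyv.trans hyy'
  -- not in F helpers
  have hnotF_below : ∀ c₁ u₁ : ℝ, u₁ < fFun d a c₁ → (c₁, u₁) ∉ Fset d a := by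
    intro c₁ u₁ hlt hF
    rcases fiber_mem hd_inj ha_pos ha_sum hF with h | ⟨k, hk, h⟩
    · exact absurd h (ne_of_lt hlt)
    · have := ha_pos k; linarith [h ▸ hlt]
  have hnotF_above : ∀ c₁ u₁ B : ℝ, fFun d a c₁ ≤ B →
      (∀ k, d k = c₁ → fFun d a c₁ + a k ≤ B) → B < u₁ → (c₁, u₁) ∉ Fset d a := by
    intro c₁ u₁ B h1 h2 h3 hF
    rcases fiber_mem hd_inj ha_pos ha_sum hF with h | ⟨k, hk, h⟩
    · linarith [h ▸ h3]
    · linarith [h2 k hk, h ▸ h3]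
  -- missing-point characterisation on the fibre of c
  have hmiss : ∀ u : ℝ, v < u → u < w → (c, u) ∉ S →
      u = fFun d a c ∨ (∃ k, d k = c ∧ u = fFun d a c + a k) ∨ (c, u) = x := by
    intro u h1 h2 h3
    by_cases hF : (c, u) ∈ Fset d a
    · rcases fiber_mem hd_inj ha_pos ha_sum hF with h | ⟨k, hk, h⟩
      · exact Or.inl h
      · exact Or.inr (Or.inl ⟨k, hk, h⟩)
    · by_cases hx : (c, u) = x
      · exact Or.inr (Or.inr hx)
      · exact absurd (hSmem c u hcU h1 h2 hF hx) h3
  set m2 : ℝ := if h : ∃ k, d k = c then fFun d a c + a h.choose else fFun d a c with hm2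
  have hmiss3 : ∀ u : ℝ, v < u → u < w → (c, u) ∉ S →
      u = fFun d a c ∨ u = m2 ∨ u = x.2 := by
    intro u h1 h2 h3
    rcases hmiss u h1 h2 h3 with h | ⟨k, hk, h⟩ | h
    · exact Or.inl h
    · refine Or.inr (Or.inl ?_)
      rw [hm2]
      have hex : ∃ j, d j = c := ⟨k, hk⟩
      rw [dif_pos hex]
      have : hex.choose = k := hd_inj (hex.choose_spec.trans hk.symm)
      rw [this]; exact h
    · exact Or.inr (Or.inr (congrArg Prod.snd h))
  -- the split point
  set N : Set ℝ := {u : ℝ | u ∈ Set.Icc y y' ∧ ∃ h : (c, u) ∈ S, (⟨(c, u), h⟩ : ↥S) ∉ A}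
    with hN
  have hNy' : y' ∈ N := ⟨⟨hyy'.le, le_rfl⟩, hy', hy'A⟩
  have hNne : N.Nonempty := ⟨y', hNy'⟩
  have hNbdd : BddBelow N := ⟨y, fun u hu => hu.1.1⟩
  set t : ℝ := sInf N with ht
  have hty : y ≤ t := le_csInf hNne (fun u hu => hu.1.1)
  have hty' : t ≤ y' := csInf_le hNbdd hNy'
  have htv : v < t := lt_of_lt_of_le hyv hty
  have htw : t < w := lt_of_le_of_lt hty' hy'w
  have stepA : ∀ u : ℝ, y ≤ u → u < t → ∀ h : (c, u) ∈ S, (⟨(c, u), h⟩ : ↥S) ∈ A := by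
    intro u h1 h2 h
    by_contra hnA
    have hu : u ∈ N := ⟨⟨h1, by linarith⟩, h, hnA⟩
    linarith [csInf_le hNbdd hu]
  have stepB : y < t := by
    by_contra hnot
    push_neg at hnot
    have hteq : t = y := le_antisymm hnot hty
    obtain ⟨δ₀, hδ₀pos, hball⟩ := open_ball_subset hA.isOpen hyA
    obtain ⟨u, huN, hult⟩ := (csInf_lt_iff hNbdd hNne).mp (by rw [← ht, hteq]; linarith :
      sInf N < y + δ₀)
    obtain ⟨⟨huy, huy'⟩, huS, huA⟩ := huN
    have : dist ((c, u) : ℝ × ℝ) ((c, y) : ℝ × ℝ) < δ₀ :=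
      hdlt c c u y δ₀ (by simpa using hδ₀pos) (abs_lt.mpr ⟨by linarith, by linarith⟩)
    exact huA (hball ⟨(c, u), huS⟩ this)
  have free_below : ∀ θ : ℝ, 0 < θ → ∃ γ > 0, γ ≤ θ ∧ γ ≤ t - y ∧
      ∀ u : ℝ, t - γ < u → u < t → (c, u) ∈ S := by
    intro θ hθ
    set dd : ℝ → ℝ := fun m => if m < t then t - m else 1 with hdd
    have hddpos : ∀ m, 0 < dd m := by
      intro m; rw [hdd]; dsimp only; split_ifs with h <;> [linarith; exact one_pos]
    set γ := min (min (dd (fFun d a c)) (dd m2)) (min (dd x.2) (min θ (t - y))) with hγ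
    have hγpos : 0 < γ := lt_min (lt_min (hddpos _) (hddpos _))
      (lt_min (hddpos _) (lt_min hθ (by linarith)))
    have hne_dd : ∀ (m u : ℝ), γ ≤ dd m → t - γ < u → u < t → u ≠ m := by
      intro m u hle h1 h2 he
      subst he
      rw [hdd] at hle
      simp only [] at hle
      by_cases h : u < t
      · rw [if_pos h] at hle; linarith
      · rw [if_neg h] at hle; push_neg at h; linarith
    refine ⟨γ, hγpos, (min_le_right _ _).trans ((min_le_right _ _).trans (min_le_left _ _)),
      (min_le_right _ _).trans ((min_le_right _ _).trans (min_le_right _ _)), ?_⟩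
    have hγty : γ ≤ t - y :=
      (min_le_right _ _).trans ((min_le_right _ _).trans (min_le_right _ _))
    intro u h1 h2
    by_contra hnS
    have huv : v < u := by linarith
    have huw : u < w := by linarith
    rcases hmiss3 u huv huw hnS with h | h | h
    · exact hne_dd _ u ((min_le_left _ _).trans (min_le_left _ _)) h1 h2 h
    · exact hne_dd _ u ((min_le_left _ _).trans (min_le_right _ _)) h1 h2 h
    · exact hne_dd _ u ((min_le_right _ _).trans (min_le_left _ _)) h1 h2 h
  have stepC : (c, t) ∉ S := by
    intro htS
    by_cases htA : (⟨(c, t), htS⟩ : ↥S) ∈ A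
    · obtain ⟨δ, hδpos, hball⟩ := open_ball_subset hA.isOpen htA
      obtain ⟨u, huN, hult⟩ := (csInf_lt_iff hNbdd hNne).mp (by linarith : sInf N < t + δ)
      obtain ⟨⟨huy, huy'⟩, huS, huA⟩ := huN
      have htu : t ≤ u := csInf_le hNbdd ⟨⟨huy, huy'⟩, huS, huA⟩
      rcases eq_or_lt_of_le htu with he | hlt
      · exact huA (by convert htA using 2; rw [← he])
      · refine huA (hball ⟨(c, u), huS⟩ (hdlt c c u t δ (by simpa using hδpos)
          (abs_lt.mpr ⟨by linarith, by linarith⟩)))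
    · obtain ⟨δ, hδpos, hball⟩ := open_ball_subset hA.compl.isOpen htA
      obtain ⟨γ, hγpos, hγδ, hγty, hγS⟩ := free_below δ hδpos
      have huS : (c, t - γ / 2) ∈ S := hγS _ (by linarith) (by linarith)
      have huA : (⟨(c, t - γ / 2), huS⟩ : ↥S) ∈ A :=
        stepA _ (by linarith) (by linarith) huS
      have : dist ((c, t - γ / 2) : ℝ × ℝ) ((c, t) : ℝ × ℝ) < δ :=
        hdlt c c _ t δ (by simpa using hδpos) (abs_lt.mpr ⟨by linarith, by linarith⟩)
      exact hball ⟨(c, t - γ / 2), huS⟩ this huA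
  have htly' : t < y' := by
    rcases eq_or_lt_of_le hty' with he | h
    · exact absurd (he ▸ hy') stepC
    · exact h
  have below_A : ∀ θ : ℝ, 0 < θ → ∃ γ > 0, γ ≤ θ ∧ γ ≤ t - y ∧
      ∀ u : ℝ, t - γ < u → u < t → ∃ h : (c, u) ∈ S, (⟨(c, u), h⟩ : ↥S) ∈ A := by
    intro θ hθ
    obtain ⟨γ, hγpos, hγθ, hγty, hγS⟩ := free_below θ hθ
    exact ⟨γ, hγpos, hγθ, hγty, fun u h1 h2 =>
      ⟨hγS u h1 h2, stepA u (by linarith) h2 _⟩⟩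
  have stepE : ∀ h' : ℝ, 0 < h' → ∃ u : ℝ, t < u ∧ u < t + h' ∧ u ≤ y' ∧
      ∃ hu : (c, u) ∈ S, (⟨(c, u), hu⟩ : ↥S) ∉ A := by
    intro h' hh'
    obtain ⟨u, huN, hult⟩ := (csInf_lt_iff hNbdd hNne).mp (by linarith : sInf N < t + h')
    obtain ⟨⟨huy, huy'⟩, huS, huA⟩ := huN
    have htu : t ≤ u := csInf_le hNbdd ⟨⟨huy, huy'⟩, huS, huA⟩
    have : t ≠ u := fun he => stepC (he ▸ huS)
    exact ⟨u, lt_of_le_of_ne htu this, hult, huy', huS, huA⟩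
  -- case 2 : t = f c with a jump at c ; the gap above c glues A to B
  have case2 : ∀ k, d k = c → t = fFun d a c → False := by
    intro k hdk htf
    have hak := ha_pos k
    obtain ⟨γ, hγpos, hγak, hγty, hγA⟩ := below_A (a k) hak
    obtain ⟨hpAS, hpAA⟩ := hγA (t - γ / 2) (by linarith) (by linarith)
    obtain ⟨δ₁, hδ₁pos, hball₁⟩ := open_ball_subset hA.isOpen hpAA
    obtain ⟨uB, htu, hult, huy', huBS, huBA⟩ := stepE (a k) hak
    have hζA : (⟨(c, uB), huBS⟩ : ↥S) ∈ A := by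
      refine mem_of_closed_approx hA.isClosed (fun ρ hρ => ?_)
      have hne_r : ∀ ε > 0, (Set.Ioo c (c + ε) ∩ cantorSet).Nonempty := by
        intro ε hε
        have h := (hd_ne k).2 ε hε
        rw [hdk] at h
        exact h.2
      obtain ⟨c'', ⟨hc''O, hc''C⟩, hc''gt, hc''lt, hc''x, -⟩ :=
        approach_right hne_r hO hcO (lt_min hρ hδ₁pos) x.1 x.1
      have hc''U : c'' ∈ U := by rw [hUO]; exact ⟨hc''O, hc''C⟩
      have hfc'' : fFun d a c + a k ≤ fFun d a c'' :=
        fFun_add_single ha_pos ha_sum (le_of_eq hdk.symm) (by rw [hdk]; exact hc''gt)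
      have hseg : ∀ u'', u'' ∈ Set.Icc (t - γ / 2) uB → (c'', u'') ∈ S := by
        rintro u'' ⟨hu1, hu2⟩
        exact hSmem c'' u'' hc''U (by linarith) (by linarith)
          (hnotF_below c'' u'' (by linarith)) (fun he => hc''x (congrArg Prod.fst he))
      have hcρδ : c'' - c < min ρ δ₁ := hc''lt
      have hbot : (⟨(c'', t - γ / 2), hseg _ ⟨le_rfl, by linarith⟩⟩ : ↥S) ∈ A := by
        refine hball₁ _ (hdlt c'' c _ _ δ₁ ?_ ?_)
        · rw [abs_lt]
          constructor <;> linarith [hcρδ.trans_le (min_le_right ρ δ₁)]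
        · simpa using hδ₁pos
      have htop := seg_same_class hA (by linarith : t - γ / 2 ≤ uB) hseg hbot
      exact ⟨_, htop, hdlt c'' c uB uB ρ (by
        rw [abs_lt]
        constructor <;> linarith [hcρδ.trans_le (min_le_left ρ δ₁)]) (by simpa using hρ)⟩
    exact huBA hζA
  -- case 3 : t = f c + a k : top of the gap
  have case3 : ∀ k, d k = c → t = fFun d a c + a k → False := by
    intro k hdk htf
    have hak := ha_pos k
    obtain ⟨γ, hγpos, hγak, hγty, hγA⟩ := below_A (a k) hak
    obtain ⟨hζS, hζA⟩ := hγA (t - γ / 2) (by linarith) (by linarith)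
    obtain ⟨uB, htu, hult, huy', huBS, huBA⟩ := stepE 1 one_pos
    obtain ⟨δ₂, hδ₂pos, hball₂⟩ := open_ball_subset hA.compl.isOpen huBA
    have hζB : (⟨(c, t - γ / 2), hζS⟩ : ↥S) ∈ Aᶜ := by
      refine mem_of_closed_approx hA.compl.isClosed (fun ρ hρ => ?_)
      have hne_l : ∀ ε > 0, (Set.Ioo (c - ε) c ∩ cantorSet).Nonempty := by
        intro ε hε
        have h := (hd_ne k).2 ε hε
        rw [hdk] at h
        exact h.1
      obtain ⟨c'', ⟨hc''O, hc''C⟩, hc''lt, hc''dist, hc''x, -⟩ :=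
        approach_left hne_l hO hcO (lt_min hρ hδ₂pos) x.1 x.1
      have hc''U : c'' ∈ U := by rw [hUO]; exact ⟨hc''O, hc''C⟩
      have hmono'' : fFun d a c'' ≤ fFun d a c := fFun_mono ha_pos ha_sum hc''lt.le
      have hjump'' : ∀ j, d j = c'' → fFun d a c'' + a j ≤ fFun d a c := fun j hj =>
        fFun_add_single ha_pos ha_sum (le_of_eq hj.symm) (by rw [hj]; exact hc''lt)
      have hfc : fFun d a c = t - a k := by linarith
      have hseg : ∀ u'', u'' ∈ Set.Icc (t - γ / 2) uB → (c'', u'') ∈ S := by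
        rintro u'' ⟨hu1, hu2⟩
        refine hSmem c'' u'' hc''U (by linarith) (by linarith) ?_
          (fun he => hc''x (congrArg Prod.fst he))
        exact hnotF_above c'' u'' (fFun d a c) hmono'' hjump'' (by
          rw [hfc]; linarith)
      have hcρδ : c - c'' < min ρ δ₂ := hc''dist
      have htop : (⟨(c'', uB), hseg _ ⟨by linarith, le_rfl⟩⟩ : ↥S) ∈ Aᶜ := by
        refine hball₂ _ (hdlt c'' c _ _ δ₂ ?_ ?_)
        · rw [abs_lt]
          constructor <;> linarith [hcρδ.trans_le (min_le_right ρ δ₂)]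
        · simpa using hδ₂pos
      have hbot : (⟨(c'', t - γ / 2), hseg _ ⟨le_rfl, by linarith⟩⟩ : ↥S) ∉ A := by
        intro hbA
        exact htop (seg_same_class hA (by linarith : t - γ / 2 ≤ uB) hseg hbA)
      exact ⟨_, hbot, hdlt c'' c _ _ ρ (by
        rw [abs_lt]
        constructor <;> linarith [hcρδ.trans_le (min_le_left ρ δ₂)]) (by simpa using hρ)⟩
    exact hζB hζA
  -- case 4 : t = f c, c not a jump point
  have case4 : (¬ ∃ k, d k = c) → t = fFun d a c → False := by
    intro hcd htf
    have hcr : c ∉ Set.range d := fun ⟨n, hn⟩ => hcd ⟨n, hn⟩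
    obtain ⟨γ, hγpos, hγwt, hγty, hγA⟩ := below_A (w - t) (by linarith)
    obtain ⟨hpAS, hpAA⟩ := hγA (t - γ / 2) (by linarith) (by linarith)
    obtain ⟨δ₁, hδ₁pos, hball₁⟩ := open_ball_subset hA.isOpen hpAA
    obtain ⟨uB, htu, hult, huy', huBS, huBA⟩ := stepE (γ / 4) (by linarith)
    obtain ⟨δ₂, hδ₂pos, hball₂⟩ := open_ball_subset hA.compl.isOpen huBA
    set ε₀ := min (γ / 8) ((uB - t) / 8) with hε₀
    have hε₀pos : 0 < ε₀ := lt_min (by linarith) (by linarith)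
    have hε₀γ : ε₀ ≤ γ / 8 := min_le_left _ _
    have hε₀u : ε₀ ≤ (uB - t) / 8 := min_le_right _ _
    obtain ⟨δ₃, hδ₃pos, hδ₃⟩ := tail_small (d := d) (a := a) ha_pos ha_sum c hε₀pos
    -- height bounds near c
    have hleft : ∀ c₁ : ℝ, c - δ₃ < c₁ → c₁ < c →
        t - ε₀ ≤ fFun d a c₁ ∧ fFun d a c₁ ≤ t ∧
        ∀ j, d j = c₁ → fFun d a c₁ + a j ≤ t := by
      intro c₁ h1 h2
      have hmono : fFun d a c₁ ≤ fFun d a c := fFun_mono ha_pos ha_sum h2.le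
      have hsub : fFun d a c ≤ fFun d a c₁
          + ∑' n, (if d n ∈ Set.Ico c₁ c then a n else 0) := fFun_sub_le ha_pos ha_sum h2.le
      have hmon2 : ∑' n, (if d n ∈ Set.Ico c₁ c then a n else 0)
          ≤ ∑' n, (if d n ∈ Set.Ioo (c - δ₃) (c + δ₃) ∧ d n ≠ c then a n else 0) :=
        tsum_ite_mono ha_pos ha_sum _ _ (fun n hn =>
          ⟨⟨by linarith [hn.1], by linarith [hn.2]⟩, ne_of_lt hn.2⟩)
      refine ⟨by linarith [hmon2.trans_lt hδ₃], by linarith, fun j hj => ?_⟩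
      have := fFun_add_single (d := d) ha_pos ha_sum (le_of_eq hj.symm) (by rw [hj]; exact h2)
      linarith
    have hright : ∀ c₁ : ℝ, c < c₁ → c₁ < c + δ₃ →
        t ≤ fFun d a c₁ ∧ fFun d a c₁ ≤ t + ε₀ ∧ ∀ j, d j = c₁ → a j ≤ ε₀ := by
      intro c₁ h1 h2
      have hmono : fFun d a c ≤ fFun d a c₁ := fFun_mono ha_pos ha_sum h1.le
      have hsub : fFun d a c₁ ≤ fFun d a c
          + ∑' n, (if d n ∈ Set.Ico c c₁ then a n else 0) := fFun_sub_le ha_pos ha_sum h1.le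
      have hmon2 : ∑' n, (if d n ∈ Set.Ico c c₁ then a n else 0)
          ≤ ∑' n, (if d n ∈ Set.Ioo (c - δ₃) (c + δ₃) ∧ d n ≠ c then a n else 0) :=
        tsum_ite_mono ha_pos ha_sum _ _ (fun n hn =>
          ⟨⟨by linarith [hn.1], by linarith [hn.2]⟩, fun he => hcd ⟨n, he⟩⟩)
      refine ⟨by linarith, by linarith [hmon2.trans_lt hδ₃], fun j hj => ?_⟩
      refine (single_le_tsum_ite ha_pos ha_sum _ j ?_).trans hδ₃.le
      exact ⟨⟨by rw [hj]; linarith, by rw [hj]; linarith⟩, by rw [hj]; exact ne_of_gt h1⟩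
    -- choose a jump point d m near c
    have hρmpos : 0 < min δ₁ (min δ₂ δ₃) := lt_min hδ₁pos (lt_min hδ₂pos hδ₃pos)
    obtain ⟨m, ⟨hmO, hmC⟩, hmne, hmx, hmδ⟩ :=
      dpoint_near hd_ne hd_dense hcC hO hcO hcr hρmpos x.1
    have hmU : d m ∈ U := by rw [hUO]; exact ⟨hmO, hmC⟩
    have ham := ha_pos m
    have hmδ₁ : |d m - c| < δ₁ := hmδ.trans_le (min_le_left _ _)
    have hmδ₂ : |d m - c| < δ₂ := hmδ.trans_le ((min_le_right _ _).trans (min_le_left _ _))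
    have hmδ₃ : |d m - c| < δ₃ := hmδ.trans_le ((min_le_right _ _).trans (min_le_right _ _))
    set u0 : ℝ := fFun d a (d m) + a m / 2 with hu0
    have hdm_bounds : t - ε₀ ≤ fFun d a (d m) ∧ fFun d a (d m) + a m ≤ t + 2 * ε₀ := by
      rcases lt_or_gt_of_ne hmne with h | h
      · have hb := hleft (d m) (by linarith [abs_lt.mp hmδ₃]) h
        exact ⟨hb.1, by linarith [hb.2.2 m rfl]⟩
      · have hb := hright (d m) h (by linarith [abs_lt.mp hmδ₃])
        exact ⟨by linarith [hb.1], by linarith [hb.2.1, hb.2.2 m rfl]⟩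
    have hu0a : t - ε₀ < u0 := by rw [hu0]; linarith [hdm_bounds.1]
    have hu0b : u0 < t + 2 * ε₀ := by rw [hu0]; linarith [hdm_bounds.2]
    have hu0uB : u0 < uB := by linarith
    have hu0low : t - γ / 2 < u0 := by linarith
    have hu0v : v < u0 := by linarith
    have hu0w : u0 < w := by linarith
    -- ζ := (d m, u0) is in S (inside the gap)
    have hζS : (d m, u0) ∈ S := by
      refine hSmem _ _ hmU hu0v hu0w ?_ (fun he => hmx (congrArg Prod.fst he))
      intro hF
      rcases fiber_mem hd_inj ha_pos ha_sum hF with h | ⟨j, hj, h⟩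
      · rw [hu0] at h; linarith [h]
      · have hjm : j = m := hd_inj hj
        rw [hjm] at h
        rw [hu0] at h
        linarith [h]
    -- ζ ∈ A by approach from the right of d m
    have hζA : (⟨(d m, u0), hζS⟩ : ↥S) ∈ A := by
      refine mem_of_closed_approx hA.isClosed (fun ρ hρ => ?_)
      have hne_r : ∀ ε > 0, (Set.Ioo (d m) (d m + ε) ∩ cantorSet).Nonempty :=
        fun ε hε => ((hd_ne m).2 ε hε).2
      have hcap : 0 < min ρ (min δ₁ δ₃ - |d m - c|) :=
        lt_min hρ (by rw [sub_pos]; exact lt_min hmδ₁ hmδ₃)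
      obtain ⟨c'', ⟨hc''O, hc''C⟩, hc''gt, hc''lt, hc''x, hc''c⟩ :=
        approach_right hne_r hO hmO hcap x.1 c
      have hc''U : c'' ∈ U := by rw [hUO]; exact ⟨hc''O, hc''C⟩
      have hc''cap : c'' - d m < min ρ (min δ₁ δ₃ - |d m - c|) := hc''lt
      have hc''δ : |c'' - c| < min δ₁ δ₃ := by
        have htri : |c'' - c| ≤ |c'' - d m| + |d m - c| := abs_sub_le c'' (d m) c
        have : |c'' - d m| = c'' - d m := abs_of_pos (by linarith)
        linarith [hc''cap.trans_le (min_le_right _ _)]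
      have hc''δ₁ : |c'' - c| < δ₁ := hc''δ.trans_le (min_le_left _ _)
      have hfc'' : fFun d a (d m) + a m ≤ fFun d a c'' :=
        fFun_add_single ha_pos ha_sum le_rfl hc''gt
      have hseg : ∀ u'', u'' ∈ Set.Icc (t - γ / 2) u0 → (c'', u'') ∈ S := by
        rintro u'' ⟨hu1, hu2⟩
        refine hSmem c'' u'' hc''U (by linarith) (by linarith) ?_
          (fun he => hc''x (congrArg Prod.fst he))
        refine hnotF_below c'' u'' (by rw [hu0] at hu2; linarith)
      have hbot : (⟨(c'', t - γ / 2), hseg _ ⟨le_rfl, by linarith⟩⟩ : ↥S) ∈ A := by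
        refine hball₁ _ (hdlt c'' c _ _ δ₁ hc''δ₁ ?_)
        simpa using hδ₁pos
      have htop := seg_same_class hA (by linarith : t - γ / 2 ≤ u0) hseg hbot
      refine ⟨_, htop, hdlt c'' (d m) u0 u0 ρ ?_ (by simpa using hρ)⟩
      rw [abs_lt]
      constructor <;> linarith [hc''cap.trans_le (min_le_left _ _)]
    -- ζ ∉ A by approach from the left of d m
    have hζB : (⟨(d m, u0), hζS⟩ : ↥S) ∈ Aᶜ := by
      refine mem_of_closed_approx hA.compl.isClosed (fun ρ hρ => ?_)
      have hne_l : ∀ ε > 0, (Set.Ioo (d m - ε) (d m) ∩ cantorSet).Nonempty :=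
        fun ε hε => ((hd_ne m).2 ε hε).1
      have hcap : 0 < min ρ (min δ₂ δ₃ - |d m - c|) :=
        lt_min hρ (by rw [sub_pos]; exact lt_min hmδ₂ hmδ₃)
      obtain ⟨c'', ⟨hc''O, hc''C⟩, hc''lt, hc''dist, hc''x, hc''c⟩ :=
        approach_left hne_l hO hmO hcap x.1 c
      have hc''U : c'' ∈ U := by rw [hUO]; exact ⟨hc''O, hc''C⟩
      have hc''cap : d m - c'' < min ρ (min δ₂ δ₃ - |d m - c|) := hc''dist
      have hc''δ : |c'' - c| < min δ₂ δ₃ := by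
        have htri : |c'' - c| ≤ |c'' - d m| + |d m - c| := abs_sub_le c'' (d m) c
        have : |c'' - d m| = d m - c'' := by rw [abs_sub_comm]; exact abs_of_pos (by linarith)
        linarith [hc''cap.trans_le (min_le_right _ _)]
      have hc''δ₂ : |c'' - c| < δ₂ := hc''δ.trans_le (min_le_left _ _)
      have hmono'' : fFun d a c'' ≤ fFun d a (d m) := fFun_mono ha_pos ha_sum hc''lt.le
      have hjump'' : ∀ j, d j = c'' → fFun d a c'' + a j ≤ fFun d a (d m) := fun j hj =>
        fFun_add_single ha_pos ha_sum (le_of_eq hj.symm) (by rw [hj]; exact hc''lt)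
      have hfu0 : fFun d a (d m) < u0 := by rw [hu0]; linarith
      have hseg : ∀ u'', u'' ∈ Set.Icc u0 uB → (c'', u'') ∈ S := by
        rintro u'' ⟨hu1, hu2⟩
        refine hSmem c'' u'' hc''U (by linarith) (by linarith) ?_
          (fun he => hc''x (congrArg Prod.fst he))
        exact hnotF_above c'' u'' (fFun d a (d m)) hmono'' hjump'' (by linarith)
      have htop : (⟨(c'', uB), hseg _ ⟨hu0uB.le, le_rfl⟩⟩ : ↥S) ∈ Aᶜ := by
        refine hball₂ _ (hdlt c'' c _ _ δ₂ hc''δ₂ ?_)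
        simpa using hδ₂pos
      have hbot : (⟨(c'', u0), hseg _ ⟨le_rfl, hu0uB.le⟩⟩ : ↥S) ∉ A := by
        intro hbA
        exact htop (seg_same_class hA hu0uB.le hseg hbA)
      refine ⟨_, hbot, hdlt c'' (d m) u0 u0 ρ ?_ (by simpa using hρ)⟩
      rw [abs_lt]
      constructor <;> linarith [hc''cap.trans_le (min_le_left _ _)]
    exact hζB hζA
  -- case 1 : (c,t) = x and (c,t) ∉ F
  have case1 : (c, t) = x → (c, t) ∉ Fset d a → False := by
    intro hxeq hcF
    have hcx : c = x.1 := congrArg Prod.fst hxeq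
    have hFclosed : IsClosed (Fset d a) := isClosed_closure
    obtain ⟨ε₁, hε₁pos, hballF⟩ := Metric.isOpen_iff.mp hFclosed.isOpen_compl (c, t) hcF
    obtain ⟨γ, hγpos, hγε, hγty, hγA⟩ := below_A ε₁ hε₁pos
    obtain ⟨hpAS, hpAA⟩ := hγA (t - γ / 2) (by linarith) (by linarith)
    obtain ⟨δ₁, hδ₁pos, hball₁⟩ := open_ball_subset hA.isOpen hpAA
    obtain ⟨uB, htu, hult, huy', huBS, huBA⟩ := stepE (ε₁ / 2) (by linarith)
    obtain ⟨δ₂, hδ₂pos, hball₂⟩ := open_ball_subset hA.compl.isOpen huBA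
    have hρpos : 0 < min δ₁ (min δ₂ (ε₁ / 2)) :=
      lt_min hδ₁pos (lt_min hδ₂pos (by linarith))
    obtain ⟨c'', ⟨hc''O, hc''C⟩, hc''ne, hc''abs⟩ :=
      near_in_U hd_ne hd_dense hcC hO hcO hρpos
    have hc''U : c'' ∈ U := by rw [hUO]; exact ⟨hc''O, hc''C⟩
    have habs1 : |c'' - c| < δ₁ := hc''abs.trans_le (min_le_left _ _)
    have habs2 : |c'' - c| < δ₂ := hc''abs.trans_le ((min_le_right _ _).trans (min_le_left _ _))
    have habs3 : |c'' - c| < ε₁ / 2 :=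
      hc''abs.trans_le ((min_le_right _ _).trans (min_le_right _ _))
    have hseg : ∀ u'', u'' ∈ Set.Icc (t - γ / 2) uB → (c'', u'') ∈ S := by
      rintro u'' ⟨hu1, hu2⟩
      have hdistF : dist ((c'', u'') : ℝ × ℝ) ((c, t) : ℝ × ℝ) < ε₁ := by
        refine hdlt c'' c u'' t ε₁ (by linarith [abs_lt.mp habs3]) ?_
        rw [abs_lt]
        constructor <;> linarith
      have hnF : (c'', u'') ∉ Fset d a := hballF (Metric.mem_ball.mpr hdistF)
      exact hSmem c'' u'' hc''U (by linarith) (by linarith) hnF (fun he => hc''ne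
        ((congrArg Prod.fst he).trans hcx.symm))
    have hbot : (⟨(c'', t - γ / 2), hseg _ ⟨le_rfl, by linarith⟩⟩ : ↥S) ∈ A := by
      refine hball₁ _ (hdlt c'' c _ _ δ₁ habs1 ?_)
      simpa using hδ₁pos
    have htop : (⟨(c'', uB), hseg _ ⟨by linarith, le_rfl⟩⟩ : ↥S) ∈ Aᶜ := by
      refine hball₂ _ (hdlt c'' c _ _ δ₂ habs2 ?_)
      simpa using hδ₂pos
    exact htop (seg_same_class hA (by linarith : t - γ / 2 ≤ uB) hseg hbot)
  -- dispatch
  rcases hmiss t htv htw stepC with h | ⟨k, hk, h⟩ | h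
  · by_cases hk : ∃ k, d k = c
    · obtain ⟨k, hk⟩ := hk; exact case2 k hk h
    · exact case4 hk h
  · exact case3 k hk h
  · by_cases hcF : (c, t) ∈ Fset d a
    · rcases fiber_mem hd_inj ha_pos ha_sum hcF with h' | ⟨k, hk, h'⟩
      · by_cases hk : ∃ k, d k = c
        · obtain ⟨k, hk⟩ := hk; exact case2 k hk h'
        · exact case4 hk h'
      · exact case3 k hk h'
    · exact case1 h hcF

end core

/-- Same as the previous proposition with `F` replaced by `F ∪ {x}` for an arbitrary point
`x ∈ C × ℝ`: for every `c ∈ U` and every point `p` of `({c} × V) \ (F ∪ {x})`, that set is the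
quasi-component of `p` in `S = (U × V) \ (F ∪ {x})`. -/
theorem stmt8 (d a : ℕ → ℝ) (hd_inj : Function.Injective d)
    (hd_ne : ∀ n, IsNonEndpoint (d n)) (hd_dense : cantorSet ⊆ closure (Set.range d))
    (ha_pos : ∀ n, 0 < a n) (ha_sum : ∑' n, a n = 1)
    (U : Set ℝ) (hUsub : U ⊆ cantorSet) (hUopen : ∃ O : Set ℝ, IsOpen O ∧ U = O ∩ cantorSet)
    (v w : ℝ) (hvw : v < w) (x : ℝ × ℝ) (hx : x ∈ cantorSet ×ˢ (Set.univ : Set ℝ))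
    (c : ℝ) (hc : c ∈ U)
    (p : ↥((U ×ˢ Set.Ioo v w) \ (Fset d a ∪ {x}))) (hp : (p : ℝ × ℝ).1 = c) :
    {q : ↥((U ×ˢ Set.Ioo v w) \ (Fset d a ∪ {x})) | (q : ℝ × ℝ).1 = c} =
      ⋂₀ {A : Set ↥((U ×ˢ Set.Ioo v w) \ (Fset d a ∪ {x})) | IsClopen A ∧ p ∈ A} := by
  obtain ⟨O, hO, hUO⟩ := hUopen
  have hpair : (p : ℝ × ℝ) = (c, (p : ℝ × ℝ).2) := by
    rw [← hp]
  ext q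
  simp only [Set.mem_setOf_eq, Set.mem_sInter]
  constructor
  · intro hq A hAmem
    obtain ⟨hclopen, hpA⟩ := hAmem
    by_contra hqA
    have hqpair : (q : ℝ × ℝ) = (c, (q : ℝ × ℝ).2) := by
      rw [← hq]
    have hpS : ((c, (p : ℝ × ℝ).2) : ℝ × ℝ) ∈ (U ×ˢ Set.Ioo v w) \ (Fset d a ∪ {x}) :=
      hpair ▸ p.property
    have hqS : ((c, (q : ℝ × ℝ).2) : ℝ × ℝ) ∈ (U ×ˢ Set.Ioo v w) \ (Fset d a ∪ {x}) :=
      hqpair ▸ q.property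
    have hpe : p = (⟨(c, (p : ℝ × ℝ).2), hpS⟩ : ↥((U ×ˢ Set.Ioo v w) \ (Fset d a ∪ {x}))) :=
      Subtype.ext hpair
    have hqe : q = (⟨(c, (q : ℝ × ℝ).2), hqS⟩ : ↥((U ×ˢ Set.Ioo v w) \ (Fset d a ∪ {x}))) :=
      Subtype.ext hqpair
    rw [hpe] at hpA
    rw [hqe] at hqA
    rcases lt_trichotomy (p : ℝ × ℝ).2 (q : ℝ × ℝ).2 with h | h | h
    · exact core_lemma d a hd_inj hd_ne hd_dense ha_pos ha_sum U hUsub O hO hUO v w x rfl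
        A hclopen c (p : ℝ × ℝ).2 (q : ℝ × ℝ).2 hc h hpS hqS hpA hqA
    · have : (⟨(c, (p : ℝ × ℝ).2), hpS⟩ : ↥((U ×ˢ Set.Ioo v w) \ (Fset d a ∪ {x})))
          = ⟨(c, (q : ℝ × ℝ).2), hqS⟩ := by
        apply Subtype.ext
        exact Prod.ext_iff.mpr ⟨rfl, h⟩
      exact hqA (this ▸ hpA)
    · exact core_lemma d a hd_inj hd_ne hd_dense ha_pos ha_sum U hUsub O hO hUO v w x rfl
        Aᶜ hclopen.compl c (q : ℝ × ℝ).2 (p : ℝ × ℝ).2 hc h hqS hpS hqA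
        (fun hh => hh hpA)
  · intro hq
    by_contra hne
    have hqU : (q : ℝ × ℝ).1 ∈ U := q.property.1.1
    have hpCq : (q : ℝ × ℝ).1 ∈ cantorSet := hUsub hqU
    have hcC : c ∈ cantorSet := hUsub hc
    rcases lt_or_gt_of_ne hne with h | h
    · obtain ⟨s, hs1, hs2, hsC⟩ := cantor_no_interval h
      set A : Set ↥((U ×ˢ Set.Ioo v w) \ (Fset d a ∪ {x})) :=
        {r | s < (r : ℝ × ℝ).1} with hAdef
      have hAeq : A = (fun r : ↥((U ×ˢ Set.Ioo v w) \ (Fset d a ∪ {x})) =>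
          (r : ℝ × ℝ).1) ⁻¹' (Set.Ici s) := by
        ext r
        simp only [hAdef, Set.mem_setOf_eq, Set.mem_preimage, Set.mem_Ici]
        constructor
        · exact le_of_lt
        · intro hle
          rcases eq_or_lt_of_le hle with he | hlt
          · exact absurd (he ▸ hUsub r.property.1.1) hsC
          · exact hlt
      have hcont : Continuous (fun r : ↥((U ×ˢ Set.Ioo v w) \ (Fset d a ∪ {x})) =>
          (r : ℝ × ℝ).1) := continuous_fst.comp continuous_subtype_val
      have hclopen : IsClopen A := by
        constructor
        · rw [hAeq]; exact isClosed_Ici.preimage hcont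
        · rw [hAdef]; exact isOpen_Ioi.preimage hcont
      have hpA : p ∈ A := by rw [hAdef]; simp only [Set.mem_setOf_eq, hp]; linarith
      have := hq A ⟨hclopen, hpA⟩
      rw [hAdef] at this
      simp only [Set.mem_setOf_eq] at this
      linarith
    · obtain ⟨s, hs1, hs2, hsC⟩ := cantor_no_interval h
      set A : Set ↥((U ×ˢ Set.Ioo v w) \ (Fset d a ∪ {x})) :=
        {r | (r : ℝ × ℝ).1 < s} with hAdef
      have hAeq : A = (fun r : ↥((U ×ˢ Set.Ioo v w) \ (Fset d a ∪ {x})) =>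
          (r : ℝ × ℝ).1) ⁻¹' (Set.Iic s) := by
        ext r
        simp only [hAdef, Set.mem_setOf_eq, Set.mem_preimage, Set.mem_Iic]
        constructor
        · exact le_of_lt
        · intro hle
          rcases eq_or_lt_of_le hle with he | hlt
          · exact absurd (he ▸ hUsub r.property.1.1) hsC
          · exact hlt
      have hcont : Continuous (fun r : ↥((U ×ˢ Set.Ioo v w) \ (Fset d a ∪ {x})) =>
          (r : ℝ × ℝ).1) := continuous_fst.comp continuous_subtype_val
      have hclopen : IsClopen A := by
        constructor
        · rw [hAeq]; exact isClosed_Iic.preimage hcont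
        · rw [hAdef]; exact isOpen_Iio.preimage hcont
      have hpA : p ∈ A := by rw [hAdef]; simp only [Set.mem_setOf_eq, hp]; linarith
      have := hq A ⟨hclopen, hpA⟩
      rw [hAdef] at this
      simp only [Set.mem_setOf_eq] at this
      linarith
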